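/- With φ'(τ) = √(1-r²) and φ''-type relation φ̈ = -r² (where dots denote d/dτ and r = r(τ) satisfies dr/dτ = r√(1-r²)), the second fundamental forms of a graph M (hyperbolic) and its Beltrami image M̃ (Euclidean) satisfy h̃_{ij} ṽ = (1-r²) h_{ij} v, where v² = 1 + σ^{ij}u_i u_j and ṽ² = 1 + σ^{ij}ũ_i ũ_j with ũ_i = √(1-r²) u_i. In particular, h_{ij} is positive definite if and only if h̃_{ij} is positive definite. -/

import Mathlib

lemma posDef_smul_real {n : ℕ} {M : Matrix (Fin n) (Fin n) ℝ} {c : ℝ}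
    (hc : 0 < c) (hM : M.PosDef) : (c • M).PosDef := by
  refine ⟨?_, fun x hx => ?_⟩
  · unfold Matrix.IsHermitian
    rw [Matrix.conjTranspose_smul, hM.1]
    simp
  · have := hM.2 hx
    have e : (x.sum fun i xi ↦ x.sum fun j xj ↦ star xi * (c • M) i j * xj)
        = c * (x.sum fun i xi ↦ x.sum fun j xj ↦ star xi * M i j * xj) := by
      simp only [Finsupp.sum, Finset.mul_sum, Matrix.smul_apply, smul_eq_mul]
      exact Finset.sum_congr rfl fun _ _ => Finset.sum_congr rfl fun _ _ => by ring
    rw [e]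
    positivity

theorem beltrami_second_fundamental_form (n : ℕ) (r v vt : ℝ)
    (hr : 0 < r) (hr1 : r < 1) (hv : 0 < v) (hvt : 0 < vt)
    (σm σInv uij : Matrix (Fin n) (Fin n) ℝ) (du : Fin n → ℝ)
    (hσ : σm * σInv = 1)
    (hvdef : v ^ 2 = 1 + ∑ i, ∑ j, σInv i j * du i * du j)
    (hvtdef : vt ^ 2 = 1 + ∑ i, ∑ j,
      σInv i j * (Real.sqrt (1 - r ^ 2) * du i) * (Real.sqrt (1 - r ^ 2) * du j))
    (h ht : Matrix (Fin n) (Fin n) ℝ)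
    (hdef : ∀ i j, h i j * (Real.sqrt (1 - r ^ 2) / r)
      = -(uij i j) * v⁻¹ + (1 / Real.sqrt (1 - r ^ 2)) * v⁻¹ * (du i * du j + σm i j))
    (htdef : ∀ i j, ht i j * r⁻¹
      = -(Real.sqrt (1 - r ^ 2) * uij i j + (-(r ^ 2)) * (du i * du j)) * vt⁻¹
        + 1 * vt⁻¹ * ((Real.sqrt (1 - r ^ 2) * du i) * (Real.sqrt (1 - r ^ 2) * du j)
          + σm i j)) :
    (∀ i j, ht i j * vt = (1 - r ^ 2) * h i j * v) ∧
    (h.PosDef ↔ ht.PosDef) := by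
  have hr2 : (0:ℝ) < 1 - r ^ 2 := by nlinarith
  set s := Real.sqrt (1 - r ^ 2) with hs
  have hspos : 0 < s := Real.sqrt_pos.mpr hr2
  have hs2 : s ^ 2 = 1 - r ^ 2 := Real.sq_sqrt hr2.le
  have key : ∀ i j, ht i j * vt = (1 - r ^ 2) * h i j * v := by
    intro i j
    have h1 := hdef i j
    have h2 := htdef i j
    have hv' : v ≠ 0 := hv.ne'
    have hvt' : vt ≠ 0 := hvt.ne'
    have hr' : r ≠ 0 := hr.ne'
    have hs' : s ≠ 0 := hspos.ne'
    field_simp at h1 h2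
    have hvv : v * v⁻¹ = 1 := mul_inv_cancel₀ hv'
    linear_combination h2 - h1 + (h i j * v + r * (du i * du j)) * hs2
  refine ⟨key, ?_⟩
  have hc : 0 < (1 - r ^ 2) * v / vt := by positivity
  have hmat : ht = ((1 - r ^ 2) * v / vt) • h := by
    ext i j
    have := key i j
    simp only [Matrix.smul_apply, smul_eq_mul]
    field_simp
    linarith [key i j]
  constructor
  · intro hp
    rw [hmat]; exact posDef_smul_real hc hp
  · intro hp
    have : h = ((1 - r ^ 2) * v / vt)⁻¹ • ht := by
      rw [hmat, smul_smul, inv_mul_cancel₀ hc.ne', one_smul]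
    rw [this]; exact posDef_smul_real (inv_pos.mpr hc) hp
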